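/- Let n = d·e be a squarefree positive integer and let t be an integer whose residue class modulo e has multiplicative order d in (ℤ/eℤ)ˣ. Set α_j = gcd(e, t^j − 1) for positive integers j. Then the number of conjugacy classes of the group G(d,e,t) equals d · ∑_{j ∣ d} (α_j / j²) · ∑_{s ∣ (d/j)} μ(s)/s², where μ is the Möbius function and the sums are computed in the rational numbers. -/

import Mathlib

/-- The units of `ZMod e` act on `Multiplicative (ZMod e)` as (multiplicative) automorphisms. -/
def unitsMulAut (e : ℕ) : (ZMod e)ˣ →* MulAut (Multiplicative (ZMod e)) where
  toFun u := AddEquiv.toMultiplicative (DistribMulAction.toAddAut (ZMod e)ˣ (ZMod e) u)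
  map_one' := by
    ext x
    show Multiplicative.ofAdd ((1 : (ZMod e)ˣ) • x.toAdd) = x
    simp
  map_mul' u v := by
    ext x
    show Multiplicative.ofAdd (((u * v) : (ZMod e)ˣ) • x.toAdd)
      = Multiplicative.ofAdd (u • v • x.toAdd)
    rw [mul_smul]

/-- The homomorphism `Multiplicative (ZMod d) →* (ZMod e)ˣ` sending `a` to `u ^ a`,
well defined since `u ^ d = 1`. -/
def zmodPowHom {e : ℕ} (d : ℕ) (u : (ZMod e)ˣ) (hu : u ^ d = 1) :
    Multiplicative (ZMod d) →* (ZMod e)ˣ :=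
  AddMonoidHom.toMultiplicativeLeft
    (ZMod.lift d ⟨zmultiplesHom (Additive (ZMod e)ˣ) (Additive.ofMul u), by
      simpa [zmultiplesHom, ← ofMul_pow] using congrArg Additive.ofMul hu⟩)

/-- The group `G(d,e,t)` where `u` is the unit of `ZMod e` given by `t` :
the semidirect product `(ℤ/eℤ) ⋊ (ℤ/dℤ)` in which `a ∈ ℤ/dℤ` acts on `ℤ/eℤ` by
`b ↦ t ^ a * b`.  This is the group with presentation
`⟨x, y | x ^ d = 1, y ^ e = 1, x⁻¹ * y * x = y ^ t⟩`, the element `(b, a)`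
corresponding to `x ^ a * y ^ b`. -/
abbrev Gdet (d e : ℕ) (u : (ZMod e)ˣ) (hu : u ^ d = 1) : Type :=
  SemidirectProduct (Multiplicative (ZMod e)) (Multiplicative (ZMod d))
    ((unitsMulAut e).comp (zmodPowHom d u hu))


open Finset ArithmeticFunction

private lemma count_multiples {d i : ℕ} (hi : i ∣ d) (hi0 : 0 < i) :
    ((Finset.range d).filter (i ∣ ·)).card = d / i := by
  have himg : (Finset.range (d / i)).image (· * i) = (Finset.range d).filter (i ∣ ·) := by
    ext k
    simp only [Finset.mem_image, Finset.mem_range, Finset.mem_filter]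
    constructor
    · rintro ⟨m, hm, rfl⟩
      rw [Nat.lt_div_iff_mul_lt' hi, mul_comm] at hm
      exact ⟨hm, Dvd.intro_left m rfl⟩
    · rintro ⟨hk, m, rfl⟩
      exact ⟨m, by rw [Nat.lt_div_iff_mul_lt' hi]; exact hk, by ring⟩
  rw [← himg, Finset.card_image_of_injective _ (mul_left_injective₀ hi0.ne'),
    Finset.card_range]

private lemma sum_gcd_eq (d : ℕ) (hd : 0 < d) (f : ℕ → ℚ) :
    ∑ a ∈ range d, ∑ x ∈ range d, f (Nat.gcd (Nat.gcd a x) d)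
      = (d:ℚ)^2 * ∑ j ∈ d.divisors, (f j / (j:ℚ)^2) *
          ∑ s ∈ (d/j).divisors, ((moebius s : ℤ):ℚ) / (s:ℚ)^2 := by
  classical
  set g : ℕ → ℚ := fun m => ∑ x ∈ m.divisorsAntidiagonal, (moebius x.1 : ℤ) • f x.2 with hg
  have hinv : ∀ n > 0, ∑ i ∈ n.divisors, g i = f n := by
    refine (sum_eq_iff_sum_smul_moebius_eq (f := g) (g := f)).mpr ?_
    intro n _; rfl
  -- rewrite LHS
  have key : ∀ a ∈ range d, ∀ x ∈ range d,
      f (Nat.gcd (Nat.gcd a x) d) = ∑ i ∈ d.divisors, if i ∣ a ∧ i ∣ x then g i else 0 := by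
    intro a _ x _
    set D := Nat.gcd (Nat.gcd a x) d with hD
    have hDd : D ∣ d := Nat.gcd_dvd_right _ _
    have hDpos : 0 < D := Nat.pos_of_ne_zero (fun h => by
      have := Nat.eq_zero_of_gcd_eq_zero_right h; omega)
    rw [← hinv D hDpos, ← Nat.divisors_filter_dvd_of_dvd hd.ne' hDd, Finset.sum_filter]
    refine Finset.sum_congr rfl fun i hi => ?_
    have hid : i ∣ d := (Nat.mem_divisors.mp hi).1
    congr 1
    rw [hD, Nat.dvd_gcd_iff, Nat.dvd_gcd_iff]
    simp [hid]
  rw [Finset.sum_congr rfl fun a ha => Finset.sum_congr rfl (key a ha)]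
  rw [Finset.sum_congr rfl fun a _ => Finset.sum_comm, Finset.sum_comm]
  have hcount : ∀ i ∈ d.divisors,
      (∑ a ∈ range d, ∑ x ∈ range d, if i ∣ a ∧ i ∣ x then g i else 0)
        = ((d/i : ℕ):ℚ)^2 * g i := by
    intro i hi
    obtain ⟨hid, _⟩ := Nat.mem_divisors.mp hi
    have hi0 : 0 < i := Nat.pos_of_mem_divisors hi
    have : ∀ a ∈ range d, (∑ x ∈ range d, if i ∣ a ∧ i ∣ x then g i else 0)
        = if i ∣ a then ((d/i : ℕ):ℚ) * g i else 0 := by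
      intro a _
      by_cases hia : i ∣ a
      · simp only [hia, true_and, if_true]
        rw [← Finset.sum_filter, Finset.sum_const, count_multiples hid hi0, nsmul_eq_mul]
      · simp [hia]
    rw [Finset.sum_congr rfl this, ← Finset.sum_filter, Finset.sum_const,
      count_multiples hid hi0, nsmul_eq_mul]
    ring
  rw [Finset.sum_congr rfl hcount]
  -- rewrite RHS
  have hrhs : (d:ℚ)^2 * ∑ j ∈ d.divisors, (f j / (j:ℚ)^2) *
          ∑ s ∈ (d/j).divisors, ((moebius s : ℤ):ℚ) / (s:ℚ)^2
      = ∑ j ∈ d.divisors, ∑ s ∈ (d/j).divisors,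
          ((d/(j*s) : ℕ):ℚ)^2 * ((moebius s : ℤ) • f j) := by
    rw [Finset.mul_sum]
    refine Finset.sum_congr rfl fun j hj => ?_
    obtain ⟨hjd, _⟩ := Nat.mem_divisors.mp hj
    have hj0 : (0:ℚ) < j := by exact_mod_cast Nat.pos_of_mem_divisors hj
    rw [Finset.mul_sum, Finset.mul_sum]
    refine Finset.sum_congr rfl fun s hs => ?_
    have hsd := (Nat.mem_divisors.mp hs).1
    have hs0 : (0:ℚ) < s := by exact_mod_cast Nat.pos_of_mem_divisors hs
    have hj0' : 0 < j := Nat.pos_of_mem_divisors hj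
    have hs0' : 0 < s := Nat.pos_of_mem_divisors hs
    have hjs : j * s ∣ d := by
      obtain ⟨c, hc⟩ := hsd
      refine ⟨c, ?_⟩
      rw [mul_assoc, ← hc, Nat.mul_div_cancel' hjd]
    have hcast : ((d/(j*s) : ℕ):ℚ) = (d:ℚ)/((j:ℚ)*(s:ℚ)) := by
      rw [Nat.cast_div hjs (by exact_mod_cast (Nat.mul_pos hj0' hs0').ne'), Nat.cast_mul]
    rw [hcast, zsmul_eq_mul]
    field_simp
  rw [hrhs]
  -- reindex RHS double sum
  have hreindex : ∑ j ∈ d.divisors, ∑ s ∈ (d/j).divisors,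
          ((d/(j*s) : ℕ):ℚ)^2 * ((moebius s : ℤ) • f j)
      = ∑ m ∈ d.divisors, ∑ p ∈ m.divisorsAntidiagonal,
          ((d/m : ℕ):ℚ)^2 * ((moebius p.2 : ℤ) • f p.1) := by
    rw [Finset.sum_sigma', Finset.sum_sigma']
    refine Finset.sum_nbij' (fun x => ⟨x.1 * x.2, (x.1, x.2)⟩) (fun y => ⟨y.2.1, y.2.2⟩)
      ?_ ?_ ?_ ?_ ?_
    · rintro ⟨j, s⟩ hx
      simp only [Finset.mem_sigma] at hx
      obtain ⟨hj, hs⟩ := hx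
      have hj0 : 0 < j := Nat.pos_of_mem_divisors hj
      have hs0 : 0 < s := Nat.pos_of_mem_divisors hs
      obtain ⟨hjd, hd0⟩ := Nat.mem_divisors.mp hj
      obtain ⟨hsd, _⟩ := Nat.mem_divisors.mp hs
      simp only [Finset.mem_sigma]
      refine ⟨Nat.mem_divisors.mpr ⟨?_, hd0⟩, Nat.mem_divisorsAntidiagonal.mpr ⟨rfl, ?_⟩⟩
      · obtain ⟨c, hc⟩ := hsd
        exact ⟨c, by rw [mul_assoc, ← hc, Nat.mul_div_cancel' hjd]⟩
      · exact Nat.mul_ne_zero hj0.ne' hs0.ne'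
    · rintro ⟨m, j, s⟩ hy
      simp only [Finset.mem_sigma] at hy
      obtain ⟨hmmem, hmem⟩ := hy
      obtain ⟨hmd, hd0⟩ := Nat.mem_divisors.mp hmmem
      obtain ⟨hjs, hm0⟩ := Nat.mem_divisorsAntidiagonal.mp hmem
      have hj0 : 0 < j := Nat.pos_of_ne_zero (by rintro rfl; simp at hjs; exact hm0 hjs.symm)
      have hs0 : 0 < s := Nat.pos_of_ne_zero (by rintro rfl; simp at hjs; exact hm0 hjs.symm)
      have hjm : j ∣ m := Dvd.intro _ hjs
      obtain ⟨c, hc⟩ := hmd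
      have hc0 : c ≠ 0 := by rintro rfl; simp at hc; exact hd0 hc
      have hdj : d / j = s * c := by
        rw [hc, ← hjs, mul_assoc, Nat.mul_div_cancel_left _ hj0]
      simp only [Finset.mem_sigma]
      exact ⟨Nat.mem_divisors.mpr ⟨hjm.trans ⟨c, hc⟩, hd0⟩,
        Nat.mem_divisors.mpr ⟨⟨c, hdj⟩, by rw [hdj]; exact Nat.mul_ne_zero hs0.ne' hc0⟩⟩
    · rintro ⟨j, s⟩ hx; rfl
    · rintro ⟨m, j, s⟩ hy
      simp only [Finset.mem_sigma] at hy
      obtain ⟨_, hmem⟩ := hy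
      obtain ⟨hjs, _⟩ := Nat.mem_divisorsAntidiagonal.mp hmem
      simp [hjs]
    · rintro ⟨j, s⟩ hx; rfl
  rw [hreindex]
  -- now match with LHS  ∑_i (d/i)^2 * g i
  refine Finset.sum_congr rfl fun m hm => ?_
  rw [hg, Finset.mul_sum]
  conv_rhs => rw [← Nat.map_swap_divisorsAntidiagonal, Finset.sum_map]
  refine Finset.sum_congr rfl fun p hp => ?_
  simp [Equiv.prodComm]


private lemma gcd_lemma (e d : ℕ) (hd : 0 < d) (t : ℤ)
    (htd : (e:ℤ) ∣ t ^ d - 1) (a x : ℕ) :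
    (Nat.gcd e (Int.gcd (t ^ a - 1) (t ^ x - 1)) : ℤ)
      = (Int.gcd (e:ℤ) (t ^ Nat.gcd (Nat.gcd a x) d - 1) : ℤ) := by
  set g := Nat.gcd (Nat.gcd a x) d with hgdef
  have pow_sub_dvd : ∀ b : ℕ, g ∣ b → (t ^ g - 1 : ℤ) ∣ t ^ b - 1 := by
    rintro b ⟨k, rfl⟩
    rw [pow_mul]
    simpa using sub_dvd_pow_sub_pow (t ^ g) 1 k
  have hle : Int.gcd (e:ℤ) (t ^ g - 1) ∣ Nat.gcd e (Int.gcd (t ^ a - 1) (t ^ x - 1)) := by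
    apply Nat.dvd_gcd
    · exact Int.ofNat_dvd.mp (Int.gcd_dvd_left _ _)
    · apply Int.ofNat_dvd.mp
      apply Int.dvd_coe_gcd
      · exact (Int.gcd_dvd_right _ _).trans
          (pow_sub_dvd a ((Nat.gcd_dvd_left _ _).trans (Nat.gcd_dvd_left a x)))
      · exact (Int.gcd_dvd_right _ _).trans
          (pow_sub_dvd x ((Nat.gcd_dvd_left _ _).trans (Nat.gcd_dvd_right a x)))
  refine congrArg _ (Nat.dvd_antisymm ?_ hle)
  · set M := Nat.gcd e (Int.gcd (t ^ a - 1) (t ^ x - 1)) with hM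
    have hMe : (M:ℤ) ∣ (e:ℤ) := Int.ofNat_dvd.mpr (Nat.gcd_dvd_left _ _)
    have hpow : ∀ b : ℕ, (M:ℤ) ∣ t ^ b - 1 → (t : ZMod M) ^ b = 1 := by
      intro b hb
      have := (ZMod.intCast_zmod_eq_zero_iff_dvd (t ^ b - 1) M).mpr hb
      push_cast at this
      linear_combination this
    have h1 : (t : ZMod M) ^ a = 1 := hpow a <|
      (Int.ofNat_dvd.mpr (Nat.gcd_dvd_right _ _)).trans (Int.gcd_dvd_left _ _)
    have h2 : (t : ZMod M) ^ x = 1 := hpow x <|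
      (Int.ofNat_dvd.mpr (Nat.gcd_dvd_right _ _)).trans (Int.gcd_dvd_right _ _)
    have h3 : (t : ZMod M) ^ d = 1 := hpow d (hMe.trans htd)
    have hord : orderOf (t : ZMod M) ∣ g :=
      Nat.dvd_gcd (Nat.dvd_gcd (orderOf_dvd_of_pow_eq_one h1) (orderOf_dvd_of_pow_eq_one h2))
        (orderOf_dvd_of_pow_eq_one h3)
    have hg1 : (t : ZMod M) ^ g = 1 := orderOf_dvd_iff_pow_eq_one.mp hord
    have : (M:ℤ) ∣ t ^ g - 1 := by
      rw [← ZMod.intCast_zmod_eq_zero_iff_dvd]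
      push_cast
      rw [hg1]
      ring
    exact Int.ofNat_dvd.mp (Int.dvd_coe_gcd hMe this)


private lemma zmodPowHom_apply {e : ℕ} (d : ℕ) [NeZero d] (u : (ZMod e)ˣ) (hu : u ^ d = 1)
    (h : Multiplicative (ZMod d)) :
    zmodPowHom d u hu h = u ^ (h.toAdd.val) := by
  have hh : h.toAdd = (((h.toAdd.val : ℤ)) : ZMod d) := by
    push_cast
    exact (ZMod.natCast_rightInverse h.toAdd).symm
  rw [zmodPowHom, AddMonoidHom.coe_toMultiplicativeLeft, Function.comp_apply, Function.comp_apply]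
  conv_lhs => rw [hh]
  rw [ZMod.lift_coe]
  simp only [zmultiplesHom_apply, toMul_zsmul, toMul_ofMul, zpow_natCast]

private lemma commute_iff {d e : ℕ} [NeZero d] [NeZero e] (u : (ZMod e)ˣ) (hu : u ^ d = 1)
    (g1 g2 : Gdet d e u hu) :
    Commute g1 g2 ↔
      ((u : ZMod e) ^ (g2.right.toAdd.val) - 1) * g1.left.toAdd
        - ((u : ZMod e) ^ (g1.right.toAdd.val) - 1) * g2.left.toAdd = 0 := by
  have hmul : ∀ a b : Gdet d e u hu,
      (a * b).left.toAdd = a.left.toAdd + ((u : ZMod e) ^ (a.right.toAdd.val)) * b.left.toAdd := by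
    intro a b
    rw [SemidirectProduct.mul_left, toAdd_mul]
    congr 1
    show Multiplicative.toAdd ((unitsMulAut e) ((zmodPowHom d u hu) a.right) b.left) = _
    rw [zmodPowHom_apply]
    show (u ^ (a.right.toAdd.val)) • b.left.toAdd = _
    simp [Units.smul_def, smul_eq_mul, Units.val_pow_eq_pow_val]
  constructor
  · intro hc
    have h := congrArg (fun z : Gdet d e u hu => z.left.toAdd) hc
    simp only [hmul] at h
    linear_combination -h
  · intro h
    have hleft : (g1 * g2).left = (g2 * g1).left := by
      apply Multiplicative.toAdd.injective
      simp only [hmul]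
      linear_combination -h
    have hright : (g1 * g2).right = (g2 * g1).right := by
      simp only [SemidirectProduct.mul_right]
      exact mul_comm _ _
    exact SemidirectProduct.ext hleft hright

private lemma card_solutions (e : ℕ) (he : 0 < e) (A B : ℤ) :
    Nat.card {p : ZMod e × ZMod e // (B : ZMod e) * p.1 - (A : ZMod e) * p.2 = 0}
      = e * Nat.gcd e (Int.gcd A B) := by
  haveI : NeZero e := ⟨he.ne'⟩
  set γ : ℕ := Int.gcd A B with hγ
  set ψ : ZMod e × ZMod e →+ ZMod e :=
    { toFun := fun p => (B : ZMod e) * p.1 - (A : ZMod e) * p.2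
      map_zero' := by simp
      map_add' := by intro p q; simp [Prod.fst_add, Prod.snd_add]; ring } with hψ
  have hker : Nat.card {p : ZMod e × ZMod e // (B : ZMod e) * p.1 - (A : ZMod e) * p.2 = 0}
      = Nat.card ψ.ker := by
    apply Nat.card_congr
    exact Equiv.subtypeEquivRight fun p => (AddMonoidHom.mem_ker (f := ψ)).symm
  have hrange : ψ.range = AddSubgroup.zmultiples ((γ : ℤ) : ZMod e) := by
    apply le_antisymm
    · rintro w ⟨p, rfl⟩
      obtain ⟨a', ha⟩ : (γ : ℤ) ∣ A := Int.gcd_dvd_left _ _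
      obtain ⟨b', hb⟩ : (γ : ℤ) ∣ B := Int.gcd_dvd_right _ _
      obtain ⟨k, hk⟩ := ZMod.intCast_surjective
        ((b' : ZMod e) * p.1 - (a' : ZMod e) * p.2)
      rw [AddSubgroup.mem_zmultiples_iff]
      refine ⟨k, ?_⟩
      show (k : ℤ) • ((γ : ℤ) : ZMod e) = (B : ZMod e) * p.1 - (A : ZMod e) * p.2
      rw [zsmul_eq_mul, hk, ha, hb]
      push_cast
      ring
    · rw [AddSubgroup.zmultiples_le]
      refine ⟨(((Int.gcdB A B : ℤ) : ZMod e), -((Int.gcdA A B : ℤ) : ZMod e)), ?_⟩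
      have hval : ψ (((Int.gcdB A B : ℤ) : ZMod e), -((Int.gcdA A B : ℤ) : ZMod e))
          = (B : ZMod e) * ((Int.gcdB A B : ℤ) : ZMod e)
            + (A : ZMod e) * ((Int.gcdA A B : ℤ) : ZMod e) := by
        show (B : ZMod e) * _ - (A : ZMod e) * _ = _
        ring
      rw [hval, hγ, Int.gcd_eq_gcd_ab A B]
      push_cast
      ring
  have hcardrange : Nat.card ψ.range = e / Nat.gcd e γ := by
    rw [hrange]
    have hcast : ((γ : ℤ) : ZMod e) = ((γ : ℕ) : ZMod e) := by push_cast; rfl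
    rw [hcast, Nat.card_zmultiples, ZMod.addOrderOf_coe _ he.ne']
  have htot : Nat.card (ZMod e × ZMod e) = Nat.card ((ZMod e × ZMod e) ⧸ ψ.ker) * Nat.card ψ.ker :=
    AddSubgroup.card_eq_card_quotient_mul_card_addSubgroup ψ.ker
  have hq : Nat.card ((ZMod e × ZMod e) ⧸ ψ.ker) = Nat.card ψ.range :=
    Nat.card_congr (QuotientAddGroup.quotientKerEquivRange ψ).toEquiv
  have hprod : Nat.card (ZMod e × ZMod e) = e * e := by
    simp [Nat.card_prod, Nat.card_eq_fintype_card, ZMod.card]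
  have hγe : Nat.gcd e γ ∣ e := Nat.gcd_dvd_left _ _
  have hγpos : 0 < Nat.gcd e γ := Nat.gcd_pos_of_pos_left _ he
  have hquotpos : 0 < e / Nat.gcd e γ := Nat.div_pos (Nat.le_of_dvd he hγe) hγpos
  rw [hker]
  have h1 : e / Nat.gcd e γ * Nat.card ψ.ker = e * e := by
    rw [← hcardrange, ← hq, ← htot, hprod]
  have h2 : e / Nat.gcd e γ * (e * Nat.gcd e γ) = e * e := by
    have : e / Nat.gcd e γ * (e * Nat.gcd e γ) = e / Nat.gcd e γ * Nat.gcd e γ * e := by ring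
    rw [this, Nat.div_mul_cancel hγe]
  exact Nat.eq_of_mul_eq_mul_left hquotpos (h1.trans h2.symm)

private lemma nat_card_sigma {ι : Type*} [Fintype ι] (T : ι → Type*) [∀ i, Fintype (T i)] :
    Nat.card (Σ i, T i) = ∑ i, Nat.card (T i) := by
  simp [Nat.card_eq_fintype_card, Fintype.card_sigma]

private lemma zmod_sum {M : Type*} [AddCommMonoid M] (d : ℕ) [NeZero d] (F : ℕ → M) :
    ∑ y : ZMod d, F y.val = ∑ a ∈ Finset.range d, F a := by
  refine Finset.sum_nbij' (fun y => y.val) (fun a => (a : ZMod d)) ?_ ?_ ?_ ?_ ?_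
  · intro y _
    exact Finset.mem_range.mpr (ZMod.val_lt y)
  · intro a _
    exact Finset.mem_univ _
  · intro y _
    exact ZMod.natCast_rightInverse y
  · intro a ha
    exact ZMod.val_cast_of_lt (Finset.mem_range.mp ha)
  · intro y _
    rfl

private lemma main_count (d e : ℕ) (hd : 0 < d) (he : 0 < e) (t : ℤ) (u : (ZMod e)ˣ)
    (hut : (u : ZMod e) = (t : ZMod e)) (hu1 : u ^ d = 1) :
    Nat.card (ConjClasses (Gdet d e u hu1)) * (e * d)
      = ∑ a ∈ Finset.range d, ∑ x ∈ Finset.range d,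
          e * Nat.gcd e (Int.gcd (t ^ a - 1) (t ^ x - 1)) := by
  haveI : NeZero d := ⟨hd.ne'⟩
  haveI : NeZero e := ⟨he.ne'⟩
  classical
  have hG : Nat.card (Gdet d e u hu1) = e * d := by
    have E : Gdet d e u hu1 ≃ (Multiplicative (ZMod e) × Multiplicative (ZMod d)) :=
      ⟨fun g => (g.left, g.right), fun p => ⟨p.1, p.2⟩, fun g => rfl, fun p => rfl⟩
    have h1 : Nat.card (Multiplicative (ZMod e)) = e :=
      (Nat.card_congr Multiplicative.toAdd).trans (Nat.card_zmod e)
    have h2 : Nat.card (Multiplicative (ZMod d)) = d :=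
      (Nat.card_congr Multiplicative.toAdd).trans (Nat.card_zmod d)
    rw [Nat.card_congr E, Nat.card_prod, h1, h2]
  rw [← hG, ← card_comm_eq_card_conjClasses_mul_card]
  have E2 : {p : Gdet d e u hu1 × Gdet d e u hu1 // Commute p.1 p.2} ≃
      Σ y : ZMod d × ZMod d, {b : ZMod e × ZMod e //
        ((u:ZMod e) ^ (y.2.val) - 1) * b.1 - ((u:ZMod e) ^ (y.1.val) - 1) * b.2 = 0} :=
    { toFun := fun p => ⟨(p.1.1.right.toAdd, p.1.2.right.toAdd),
        ⟨(p.1.1.left.toAdd, p.1.2.left.toAdd), (commute_iff u hu1 p.1.1 p.1.2).mp p.2⟩⟩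
      invFun := fun s => ⟨(⟨Multiplicative.ofAdd s.2.1.1, Multiplicative.ofAdd s.1.1⟩,
        ⟨Multiplicative.ofAdd s.2.1.2, Multiplicative.ofAdd s.1.2⟩),
        (commute_iff u hu1 _ _).mpr s.2.2⟩
      left_inv := fun p => rfl
      right_inv := fun s => rfl }
  rw [Nat.card_congr E2, nat_card_sigma]
  have hsol : ∀ y : ZMod d × ZMod d,
      Nat.card {b : ZMod e × ZMod e //
        ((u:ZMod e) ^ (y.2.val) - 1) * b.1 - ((u:ZMod e) ^ (y.1.val) - 1) * b.2 = 0}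
        = e * Nat.gcd e (Int.gcd (t ^ y.1.val - 1) (t ^ y.2.val - 1)) := by
    intro y
    rw [← card_solutions e he (t ^ y.1.val - 1) (t ^ y.2.val - 1)]
    apply Nat.card_congr
    apply Equiv.subtypeEquivRight
    intro b
    have hc : ∀ v : ℕ, ((t ^ v - 1 : ℤ) : ZMod e) = (u : ZMod e) ^ v - 1 := by
      intro v
      rw [hut]
      push_cast
      ring
    rw [hc, hc]
  simp only [hsol]
  rw [Fintype.sum_prod_type]
  rw [zmod_sum d (fun a => ∑ y2 : ZMod d, e * Nat.gcd e (Int.gcd (t ^ a - 1) (t ^ y2.val - 1)))]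
  exact Finset.sum_congr rfl fun a _ =>
    zmod_sum d (fun x => e * Nat.gcd e (Int.gcd (t ^ a - 1) (t ^ x - 1)))

open ArithmeticFunction in
/-- **Class number formula for groups of squarefree order.**
Let `n = d * e` be squarefree and `t` an integer whose residue class mod `e` has
multiplicative order `d` in `(ℤ/eℤ)ˣ`.  With `α j = gcd (e, t^j - 1)`, the number of
conjugacy classes of `G(d,e,t)` equals
`d * ∑_{j ∣ d} (α j / j²) * ∑_{s ∣ d/j} μ(s)/s²`, where `μ` is the Möbius function. -/
theorem classNumber_formula (d e : ℕ) (hd : 0 < d) (he : 0 < e)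
    (hn : Squarefree (d * e)) (t : ℤ) (u : (ZMod e)ˣ)
    (hu : (u : ZMod e) = (t : ZMod e)) (hord : orderOf u = d) :
    (Nat.card (ConjClasses (Gdet d e u (by rw [← hord]; exact pow_orderOf_eq_one u))) : ℚ)
      = (d : ℚ) * ∑ j ∈ Nat.divisors d,
          ((Int.gcd (e : ℤ) (t ^ j - 1) : ℚ) / (j : ℚ) ^ 2) *
            ∑ s ∈ Nat.divisors (d / j), (moebius s : ℚ) / (s : ℚ) ^ 2 := by
  classical
  haveI : NeZero d := ⟨hd.ne'⟩
  haveI : NeZero e := ⟨he.ne'⟩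
  have hu1 : u ^ d = 1 := by rw [← hord]; exact pow_orderOf_eq_one u
  have htd : (e : ℤ) ∣ t ^ d - 1 := by
    have h1 : ((t : ZMod e)) ^ d = 1 := by
      rw [← hu, ← Units.val_pow_eq_pow_val, hu1, Units.val_one]
    rw [← ZMod.intCast_zmod_eq_zero_iff_dvd]
    push_cast
    rw [h1]
    ring
  have key := main_count d e hd he t u hu hu1
  show (Nat.card (ConjClasses (Gdet d e u hu1)) : ℚ) = _
  have hne : ((e : ℚ) * (d : ℚ)) ≠ 0 := by positivity
  apply mul_right_cancel₀ hne
  have hQ : (Nat.card (ConjClasses (Gdet d e u hu1)) : ℚ) * ((e:ℚ) * (d:ℚ))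
      = (e:ℚ) * ∑ a ∈ Finset.range d, ∑ x ∈ Finset.range d,
          ((Int.gcd (e:ℤ) (t ^ (Nat.gcd (Nat.gcd a x) d) - 1) : ℕ) : ℚ) := by
    have hcast := congrArg (fun n : ℕ => (n : ℚ)) key
    push_cast at hcast
    rw [hcast, Finset.mul_sum]
    refine Finset.sum_congr rfl fun a _ => ?_
    rw [Finset.mul_sum]
    refine Finset.sum_congr rfl fun x _ => ?_
    congr 1
    exact_mod_cast congrArg (fun z : ℤ => (z : ℚ)) (gcd_lemma e d hd t htd a x)
  rw [hQ, sum_gcd_eq d hd (fun j => ((Int.gcd (e:ℤ) (t ^ j - 1) : ℕ) : ℚ))]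
  ring
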